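/- arXiv:2407.15533 — 3 statements merged into one kernel-verified Lean document; each statement's English description precedes it below -/
import Mathlib

section
/- Let $h : \{0,1\}^{\le M} \to \mathbb{R}$ be harmonic on the binary tree, i.e., $h(z0) + h(z1) + h(z') = 3h(z)$ for every internal vertex $z$ of depth $1 \le n < M$ with parent $z'$, with $h(\emptyset) = 0$. Define increments $a(z) = h(z) - h(\text{parent}(z))$ and $\Sigma(z) = \sum_{y} u(zy)$ over all leaf-extensions $y$ of length $M - |z|$, where $u = h|_{\text{leaves}}$. Then for every vertex $z$ of depth $n$ ($1 \le n \le M$): $\Sigma(z) = 2^{M-n}\sum_{j=1}^{n-1} a(z^{(j)}) + (2^{M-n+1}-1)\, a(z)$, where $z^{(j)}$ denotes the depth-$j$ ancestor of $z$. -/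
lemma tele_14 (h a : List Bool → ℝ) (hroot : h [] = 0)
    (ha : ∀ z, a z = h z - h z.dropLast) :
    ∀ z : List Bool, h z = ∑ j ∈ Finset.Icc 1 z.length, a (z.take j) := by
  intro z
  induction z using List.reverseRecOn with
  | nil => simp [hroot]
  | append_singleton l b ih =>
    rw [show (l ++ [b]).length = l.length + 1 from by simp,
        Finset.sum_Icc_succ_top (by omega)]
    have h1 : ∀ j ∈ Finset.Icc 1 l.length, a ((l ++ [b]).take j) = a (l.take j) := by
      intro j hj
      simp only [Finset.mem_Icc] at hj
      rw [List.take_append_of_le_length hj.2]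
    rw [Finset.sum_congr rfl h1, ← ih,
        List.take_of_length_le (by simp), ha (l ++ [b]), List.dropLast_concat]
    ring

lemma aux_14 (M : ℕ) (h : List Bool → ℝ) (hroot : h [] = 0)
    (hharm : ∀ z : List Bool, 1 ≤ z.length → z.length < M →
      h (z ++ [false]) + h (z ++ [true]) + h z.dropLast = 3 * h z)
    (a : List Bool → ℝ) (ha : ∀ z, a z = h z - h z.dropLast) :
    ∀ (k : ℕ) (z : List Bool), 1 ≤ z.length → z.length + k = M →
    (∑ y : Fin k → Bool, h (z ++ List.ofFn y))
      = 2 ^ k * (∑ j ∈ Finset.Icc 1 (z.length - 1), a (z.take j))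
        + ((2:ℝ) ^ (k + 1) - 1) * a z := by
  intro k
  induction k with
  | zero =>
    intro z h1 h2
    have hsplit : ∑ j ∈ Finset.Icc 1 z.length, a (z.take j)
        = ∑ j ∈ Finset.Icc 1 (z.length - 1), a (z.take j) + a z := by
      have hz : z.length = (z.length - 1) + 1 := by omega
      rw [hz, Finset.sum_Icc_succ_top (by omega), ← hz, List.take_length]
    have : (∑ y : Fin 0 → Bool, h (z ++ List.ofFn y)) = h z := by
      simp
    rw [this, tele_14 h a hroot ha z, hsplit]
    ring
  | succ k ih =>
    intro z h1 h2
    have hlt : z.length < M := by omega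
    -- increment identity
    have hinc : a (z ++ [false]) + a (z ++ [true]) = a z := by
      have := hharm z h1 hlt
      rw [ha (z ++ [false]), ha (z ++ [true]), ha z,
          List.dropLast_concat, List.dropLast_concat]
      linarith
    -- split the sum over the first coordinate
    have hsum : (∑ y : Fin (k+1) → Bool, h (z ++ List.ofFn y))
        = (∑ y : Fin k → Bool, h ((z ++ [false]) ++ List.ofFn y))
          + (∑ y : Fin k → Bool, h ((z ++ [true]) ++ List.ofFn y)) := by
      rw [← (Fin.consEquiv (fun _ : Fin (k+1) => Bool)).sum_comp
            (fun y => h (z ++ List.ofFn y))]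
      rw [Fintype.sum_prod_type, Fintype.sum_bool, add_comm]
      congr 1
      all_goals
        apply Finset.sum_congr rfl
        intro y _
        simp [Fin.consEquiv, List.ofFn_succ]
    have hb : ∀ b : Bool, (∑ y : Fin k → Bool, h ((z ++ [b]) ++ List.ofFn y))
        = 2 ^ k * ((∑ j ∈ Finset.Icc 1 (z.length - 1), a (z.take j)) + a z)
          + ((2:ℝ) ^ (k + 1) - 1) * a (z ++ [b]) := by
      intro b
      have hlen : (z ++ [b]).length = z.length + 1 := by simp
      have := ih (z ++ [b]) (by simp) (by omega)
      rw [this, hlen]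
      congr 2
      have hz : z.length + 1 - 1 = (z.length - 1) + 1 := by omega
      rw [hz, Finset.sum_Icc_succ_top (by omega)]
      congr 1
      · apply Finset.sum_congr rfl
        intro j hj
        simp only [Finset.mem_Icc] at hj
        rw [List.take_append_of_le_length (by omega)]
      · rw [show z.length - 1 + 1 = z.length from by omega,
            List.take_append_of_le_length (le_refl _), List.take_length]
    rw [hsum, hb false, hb true]
    have : ((2:ℝ)^(k+1) - 1) * a (z ++ [false]) + ((2:ℝ)^(k+1) - 1) * a (z ++ [true])
        = ((2:ℝ)^(k+1) - 1) * a z := by rw [← mul_add, hinc]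
    ring_nf
    ring_nf at this ⊢
    nlinarith [this]

theorem stmt_14 (M : ℕ) (hM : 1 ≤ M) (h : List Bool → ℝ) (hroot : h [] = 0)
    (hharm : ∀ z : List Bool, 1 ≤ z.length → z.length < M →
      h (z ++ [false]) + h (z ++ [true]) + h z.dropLast = 3 * h z)
    (a : List Bool → ℝ) (ha : ∀ z, a z = h z - h z.dropLast)
    (z : List Bool) (hn1 : 1 ≤ z.length) (hnM : z.length ≤ M) :
    (∑ y : Fin (M - z.length) → Bool, h (z ++ List.ofFn y))
      = 2 ^ (M - z.length) * (∑ j ∈ Finset.Icc 1 (z.length - 1), a (z.take j))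
        + ((2:ℝ) ^ (M - z.length + 1) - 1) * a z := by
  exact aux_14 M h hroot hharm a ha (M - z.length) z hn1 (by omega)
end

section
/- Let $M \ge 2$, $\epsilon > 0$, and let $h$ be the solution of the tree Dirichlet problem on the binary tree of depth $M$ with $h(\emptyset) = 0$ and boundary condition $u(z) = \epsilon\sum_{\ell=2}^M 2^{M-\ell}z_\ell + \frac{\epsilon}{2}$ if $z_1 = 1$ and $u(z) = -\epsilon\sum_{\ell=2}^M 2^{M-\ell}z_\ell - \frac{\epsilon}{2}$ if $z_1 = 0$. Then for every $1 \le n \le M$ and all distinct vertices $z \ne y$ of depth $n$, $|h(z) - h(y)| \ge \epsilon$. -/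
/-- bits 2..n of `z` read as a binary number -/
def tval17 (z : List Bool) : ℕ :=
  ∑ ℓ ∈ Finset.Icc 2 z.length, 2 ^ (z.length - ℓ) * (if z.getD (ℓ - 1) false then 1 else 0)

/-- signed shifted value -/
noncomputable def Wv17 (z : List Bool) : ℝ :=
  (if z.getD 0 false then (1:ℝ) else -1) * ((tval17 z : ℝ) + 1/2)

noncomputable def Vf17 (M : ℕ) (ε : ℝ) (z : List Bool) : ℝ :=
  ε * 4 ^ (M - z.length) * Wv17 z

noncomputable def lam17 (k : ℕ) : ℝ := (2 ^ k - 1) / (2 ^ (k + 1) - 1)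
noncomputable def Pc17 (k : ℕ) : ℝ := 1 / (2 ^ (k + 1) - 1)

lemma den_pos17 (k : ℕ) : (0:ℝ) < 2 ^ (k + 1) - 1 := by
  have : (2:ℝ) ^ 1 ≤ 2 ^ (k+1) := pow_le_pow_right₀ (by norm_num) (by omega)
  norm_num at this ⊢; linarith

lemma lam_nonneg17 (k : ℕ) : 0 ≤ lam17 k := by
  unfold lam17
  have h1 : (1:ℝ) ≤ 2 ^ k := by
    have := pow_le_pow_right₀ (by norm_num : (1:ℝ) ≤ 2) (Nat.zero_le k)
    simpa using this
  exact div_nonneg (by linarith) (den_pos17 k).le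

lemma lam17_zero : lam17 0 = 0 := by norm_num [lam17]
lemma Pc17_zero : Pc17 0 = 1 := by norm_num [Pc17]

lemma I1_17 (k : ℕ) : lam17 (k + 1) * (3 - 2 * lam17 k) = 1 := by
  unfold lam17
  have d1 := (den_pos17 k).ne'
  have d2 := (den_pos17 (k+1)).ne'
  field_simp
  ring

lemma I2_17 (k : ℕ) : lam17 (k + 1) * Pc17 k = Pc17 (k + 1) := by
  unfold lam17 Pc17
  have d1 := (den_pos17 k).ne'
  have d2 := (den_pos17 (k+1)).ne'
  field_simp

lemma Pc_pos17 (k : ℕ) : 0 < Pc17 k := by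
  unfold Pc17; exact one_div_pos.mpr (den_pos17 k)

lemma Pc_mul_pow17 (k : ℕ) : (1:ℝ) ≤ Pc17 k * 4 ^ k := by
  unfold Pc17
  rw [div_mul_eq_mul_div, one_mul, le_div_iff₀ (den_pos17 k), one_mul]
  have h4 : (4:ℝ) ^ k = 2 ^ k * 2 ^ k := by
    rw [show (4:ℝ) = 2 * 2 by norm_num, mul_pow]
  have h2 : (2:ℝ) ^ (k + 1) = 2 * 2 ^ k := by rw [pow_succ]; ring
  nlinarith [sq_nonneg ((2:ℝ) ^ k - 1)]

lemma getD_concat_lt (l : List Bool) (x : Bool) (n : ℕ) (hn : n < l.length) :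
    (l ++ [x]).getD n false = l.getD n false := by
  rw [List.getD, List.getD, List.getElem?_append_left hn]

lemma getD_concat_len (l : List Bool) (x : Bool) :
    (l ++ [x]).getD l.length false = x := by
  rw [List.getD, List.getElem?_concat_length]; rfl

lemma getD_zero_concat (l : List Bool) (x : Bool) (hl : l ≠ []) :
    (l ++ [x]).getD 0 false = l.getD 0 false :=
  getD_concat_lt l x 0 (List.length_pos_iff.mpr hl)

lemma tval17_concat (p : List Bool) (x : Bool) (hp : p ≠ []) :
    tval17 (p ++ [x]) = 2 * tval17 p + (if x then 1 else 0) := by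
  have hp1 : 1 ≤ p.length := List.length_pos_iff.mpr hp
  unfold tval17
  rw [show (p ++ [x]).length = p.length + 1 by simp]
  rw [Finset.sum_Icc_succ_top (by omega : 2 ≤ p.length + 1)]
  have hmain : ∀ ℓ ∈ Finset.Icc 2 p.length,
      2 ^ (p.length + 1 - ℓ) * (if (p ++ [x]).getD (ℓ - 1) false then 1 else 0)
        = 2 * (2 ^ (p.length - ℓ) * (if p.getD (ℓ - 1) false then 1 else 0)) := by
    intro ℓ hℓ
    obtain ⟨h2, h3⟩ := Finset.mem_Icc.mp hℓ
    rw [getD_concat_lt p x (ℓ - 1) (by omega), show p.length + 1 - ℓ = (p.length - ℓ) + 1 by omega,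
      pow_succ]
    ring
  rw [Finset.sum_congr rfl hmain, ← Finset.mul_sum]
  have hlast : (p ++ [x]).getD (p.length + 1 - 1) false = x := by
    rw [show p.length + 1 - 1 = p.length by omega]; exact getD_concat_len p x
  rw [hlast, Nat.sub_self, pow_zero, one_mul]

lemma tval17_inj (z : List Bool) : ∀ y : List Bool, z.length = y.length →
    z.getD 0 false = y.getD 0 false → tval17 z = tval17 y → z = y := by
  induction z using List.reverseRecOn with
  | nil =>
    intro y hl _ _
    exact (List.length_eq_zero_iff.mp hl.symm).symm
  | append_singleton p a ih =>
    intro y hl hh ht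
    rcases y.eq_nil_or_concat' with rfl | ⟨q, b, rfl⟩
    · simp at hl
    · have hpq : p.length = q.length := by
        simp only [List.length_append, List.length_singleton] at hl; omega
      by_cases hp : p = []
      · subst hp
        have hq : q = [] := List.length_eq_zero_iff.mp (by simpa using hpq.symm)
        subst hq
        have : a = b := by simpa [getD_concat_len] using hh
        rw [this]
      · have hq : q ≠ [] := by
          intro hq0
          subst hq0
          exact hp (List.length_eq_zero_iff.mp (by simpa using hpq))
        rw [tval17_concat p a hp, tval17_concat q b hq] at ht
        have hab : a = b := by
          cases a <;> cases b <;> simp at ht ⊢ <;> omega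
        subst hab
        have htv : tval17 p = tval17 q := by cases a <;> simp at ht <;> omega
        have hh' : p.getD 0 false = q.getD 0 false := by
          rwa [getD_zero_concat p a hp, getD_zero_concat q a hq] at hh
        rw [ih q hpq hh' htv]

lemma Vf17_split (M : ℕ) (ε : ℝ) (p : List Bool) (h1 : 1 ≤ p.length) (h2 : p.length < M) :
    Vf17 M ε (p ++ [false]) + Vf17 M ε (p ++ [true]) = Vf17 M ε p := by
  have hp : p ≠ [] := by intro h; subst h; simp at h1
  unfold Vf17 Wv17
  rw [show (p ++ [false]).length = p.length + 1 by simp,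
      show (p ++ [true]).length = p.length + 1 by simp,
      tval17_concat p false hp, tval17_concat p true hp,
      getD_zero_concat p false hp, getD_zero_concat p true hp,
      show M - p.length = (M - (p.length + 1)) + 1 by omega, pow_succ]
  push_cast
  norm_num
  split_ifs <;> ring

lemma Vf17_bdry (M : ℕ) (ε : ℝ) (z : List Bool) (hz : z.length = M) :
    Vf17 M ε z = if z.getD 0 false
        then ε * (∑ ℓ ∈ Finset.Icc 2 M, 2 ^ (M - ℓ) * (if z.getD (ℓ - 1) false then (1:ℝ) else 0))
              + ε / 2
        else -(ε * (∑ ℓ ∈ Finset.Icc 2 M, 2 ^ (M - ℓ) * (if z.getD (ℓ - 1) false then (1:ℝ) else 0)))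
              - ε / 2 := by
  have hc : ((tval17 z : ℕ) : ℝ)
      = ∑ ℓ ∈ Finset.Icc 2 M, 2 ^ (M - ℓ) * (if z.getD (ℓ - 1) false then (1:ℝ) else 0) := by
    unfold tval17
    rw [hz]
    push_cast
    rfl
  unfold Vf17 Wv17
  rw [hz, Nat.sub_self, pow_zero, hc]
  split_ifs <;> ring

lemma Wv17_gap (z y : List Bool) (hl : z.length = y.length) (hne : z ≠ y) :
    1 ≤ |Wv17 z - Wv17 y| := by
  have hz0 : (0:ℝ) ≤ (tval17 z : ℝ) := Nat.cast_nonneg _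
  have hy0 : (0:ℝ) ≤ (tval17 y : ℝ) := Nat.cast_nonneg _
  by_cases hz : z.getD 0 false = true <;> by_cases hy : y.getD 0 false = true <;>
    rw [Wv17, Wv17]
  · have htne : tval17 z ≠ tval17 y := fun hc => hne (tval17_inj z y hl (by rw [hz, hy]) hc)
    rw [if_pos hz, if_pos hy]
    rcases Nat.lt_or_ge (tval17 z) (tval17 y) with hlt | hge
    · have hcast : (tval17 z : ℝ) + 1 ≤ (tval17 y : ℝ) := by exact_mod_cast hlt
      rw [le_abs]; right; linarith
    · have hlt' : tval17 y < tval17 z := lt_of_le_of_ne hge (Ne.symm htne)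
      have hcast : (tval17 y : ℝ) + 1 ≤ (tval17 z : ℝ) := by exact_mod_cast hlt'
      rw [le_abs]; left; linarith
  · rw [if_pos hz, if_neg hy, le_abs]; left; linarith
  · rw [if_neg hz, if_pos hy, le_abs]; right; linarith
  · have htne : tval17 z ≠ tval17 y := fun hc => hne (tval17_inj z y hl (by
      simp only [Bool.not_eq_true] at hz hy; rw [hz, hy]) hc)
    rw [if_neg hz, if_neg hy]
    rcases Nat.lt_or_ge (tval17 z) (tval17 y) with hlt | hge
    · have hcast : (tval17 z : ℝ) + 1 ≤ (tval17 y : ℝ) := by exact_mod_cast hlt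
      rw [le_abs]; left; linarith
    · have hlt' : tval17 y < tval17 z := lt_of_le_of_ne hge (Ne.symm htne)
      have hcast : (tval17 y : ℝ) + 1 ≤ (tval17 z : ℝ) := by exact_mod_cast hlt'
      rw [le_abs]; right; linarith

lemma Wv17_parent_mono (z y : List Bool) (n : ℕ) (hn : 2 ≤ n)
    (hzl : z.length = n) (hyl : y.length = n)
    (hpp : z.dropLast ≠ y.dropLast) (hlt : Wv17 y < Wv17 z) :
    Wv17 y.dropLast < Wv17 z.dropLast := by
  rcases z.eq_nil_or_concat' with rfl | ⟨p, a, rfl⟩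
  · simp at hzl; omega
  rcases y.eq_nil_or_concat' with rfl | ⟨q, b, rfl⟩
  · simp at hyl; omega
  have hpl : p.length = n - 1 := by
    simp only [List.length_append, List.length_singleton] at hzl; omega
  have hql : q.length = n - 1 := by
    simp only [List.length_append, List.length_singleton] at hyl; omega
  have hp : p ≠ [] := by intro hc; subst hc; simp at hpl; omega
  have hq : q ≠ [] := by intro hc; subst hc; simp at hql; omega
  rw [List.dropLast_concat, List.dropLast_concat] at hpp ⊢
  rw [Wv17, Wv17, getD_zero_concat p a hp, getD_zero_concat q b hq,
    tval17_concat p a hp, tval17_concat q b hq] at hlt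
  have hz0 : (0:ℝ) ≤ (tval17 p : ℝ) := Nat.cast_nonneg _
  have hy0 : (0:ℝ) ≤ (tval17 q : ℝ) := Nat.cast_nonneg _
  rw [Wv17, Wv17]
  by_cases hsp : p.getD 0 false = true <;> by_cases hsq : q.getD 0 false = true
  · have htne : tval17 p ≠ tval17 q := fun hc =>
      hpp (tval17_inj p q (by omega) (by rw [hsp, hsq]) hc)
    rw [if_pos hsp, if_pos hsq, one_mul, one_mul] at hlt
    have hr2 : ((2 * tval17 q + (if b then 1 else 0) : ℕ) : ℝ)
        < ((2 * tval17 p + (if a then 1 else 0) : ℕ) : ℝ) := by linarith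
    have hnat : 2 * tval17 q + (if b then 1 else 0) < 2 * tval17 p + (if a then 1 else 0) := by
      exact_mod_cast hr2
    have hia : (if a then 1 else 0) ≤ 1 := by cases a <;> simp
    have hib : (if b then 1 else 0) ≤ 1 := by cases b <;> simp
    have hlt2 : tval17 q < tval17 p := by omega
    have hr : (tval17 q : ℝ) + 1 ≤ (tval17 p : ℝ) := by exact_mod_cast hlt2
    rw [if_pos hsp, if_pos hsq]
    nlinarith
  · rw [if_pos hsp, if_neg hsq]
    nlinarith
  · exfalso
    rw [if_neg hsp, if_pos hsq] at hlt
    have ha0 : (0:ℝ) ≤ ((2 * tval17 p + (if a then 1 else 0) : ℕ) : ℝ) := Nat.cast_nonneg _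
    have hb0 : (0:ℝ) ≤ ((2 * tval17 q + (if b then 1 else 0) : ℕ) : ℝ) := Nat.cast_nonneg _
    nlinarith
  · have htne : tval17 p ≠ tval17 q := fun hc =>
      hpp (tval17_inj p q (by omega) (by
        simp only [Bool.not_eq_true] at hsp hsq; rw [hsp, hsq]) hc)
    rw [if_neg hsp, if_neg hsq] at hlt
    have hr2 : ((2 * tval17 p + (if a then 1 else 0) : ℕ) : ℝ)
        < ((2 * tval17 q + (if b then 1 else 0) : ℕ) : ℝ) := by nlinarith
    have hnat : 2 * tval17 p + (if a then 1 else 0) < 2 * tval17 q + (if b then 1 else 0) := by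
      exact_mod_cast hr2
    have hia : (if a then 1 else 0) ≤ 1 := by cases a <;> simp
    have hib : (if b then 1 else 0) ≤ 1 := by cases b <;> simp
    have hlt2 : tval17 p < tval17 q := by omega
    have hr : (tval17 p : ℝ) + 1 ≤ (tval17 q : ℝ) := by exact_mod_cast hlt2
    rw [if_neg hsp, if_neg hsq]
    nlinarith

theorem stmt_17 (M : ℕ) (hM : 2 ≤ M) (ε : ℝ) (hε : 0 < ε) (h : List Bool → ℝ)
    (hroot : h [] = 0)
    (hharm : ∀ z : List Bool, 1 ≤ z.length → z.length < M →
      h (z ++ [false]) + h (z ++ [true]) + h z.dropLast = 3 * h z)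
    (hbdry : ∀ z : List Bool, z.length = M →
      h z = if z.getD 0 false
        then ε * (∑ ℓ ∈ Finset.Icc 2 M, 2 ^ (M - ℓ) * (if z.getD (ℓ - 1) false then (1:ℝ) else 0))
              + ε / 2
        else -(ε * (∑ ℓ ∈ Finset.Icc 2 M, 2 ^ (M - ℓ) * (if z.getD (ℓ - 1) false then (1:ℝ) else 0)))
              - ε / 2) :
    ∀ n : ℕ, 1 ≤ n → n ≤ M → ∀ z y : List Bool, z.length = n → y.length = n → z ≠ y →
      ε ≤ |h z - h y| := by
  -- Lemma A: the first-order recursion down the tree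
  have lemA : ∀ k : ℕ, k < M → ∀ z : List Bool, z.length = M - k →
      h z = lam17 k * h z.dropLast + Pc17 k * Vf17 M ε z := by
    intro k
    induction k with
    | zero =>
      intro _ z hz
      rw [Nat.sub_zero] at hz
      rw [hbdry z hz, ← Vf17_bdry M ε z hz, lam17_zero, Pc17_zero]
      ring
    | succ k ih =>
      intro hkM z hz
      have hlen : 1 ≤ z.length := by omega
      have hlen2 : z.length < M := by omega
      have hh := hharm z hlen hlen2
      have hlen0 : (z ++ [false]).length = M - k := by
        simp only [List.length_append, List.length_singleton]
        omega
      have hlen1 : (z ++ [true]).length = M - k := by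
        simp only [List.length_append, List.length_singleton]
        omega
      have IH0 := ih (by omega) (z ++ [false]) hlen0
      have IH1 := ih (by omega) (z ++ [true]) hlen1
      rw [List.dropLast_concat] at IH0 IH1
      have split := Vf17_split M ε z hlen hlen2
      have E : (3 - 2 * lam17 k) * h z = h z.dropLast + Pc17 k * Vf17 M ε z := by
        linear_combination -hh + IH0 + IH1 + Pc17 k * split
      linear_combination lam17 (k+1) * E - h z * I1_17 k + Vf17 M ε z * I2_17 k
  -- the monotonicity claim
  have claim : ∀ n : ℕ, 1 ≤ n → n ≤ M → ∀ z y : List Bool, z.length = n → y.length = n →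
      Vf17 M ε y < Vf17 M ε z →
      Pc17 (M - n) * (Vf17 M ε z - Vf17 M ε y) ≤ h z - h y := by
    intro n hn1
    induction n, hn1 using Nat.le_induction with
    | base =>
      intro _ z y hz hy _
      have hAz := lemA (M - 1) (by omega) z (by omega)
      have hAy := lemA (M - 1) (by omega) y (by omega)
      have hdz : z.dropLast = [] := List.length_eq_zero_iff.mp (by rw [List.length_dropLast]; omega)
      have hdy : y.dropLast = [] := List.length_eq_zero_iff.mp (by rw [List.length_dropLast]; omega)
      rw [hdz, hroot, mul_zero, zero_add] at hAz
      rw [hdy, hroot, mul_zero, zero_add] at hAy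
      have e : h z - h y = Pc17 (M - 1) * (Vf17 M ε z - Vf17 M ε y) := by
        linear_combination hAz - hAy
      linarith [e.ge]
    | succ n hn1 ih =>
      intro hn1M z y hz hy hlt
      set k := M - (n + 1) with hk
      have hAz := lemA k (by omega) z (by omega)
      have hAy := lemA k (by omega) y (by omega)
      by_cases hpp : z.dropLast = y.dropLast
      · rw [hpp] at hAz
        have e : h z - h y = Pc17 k * (Vf17 M ε z - Vf17 M ε y) := by
          linear_combination hAz - hAy
        linarith [e.ge]
      · have hWlt : Wv17 y < Wv17 z := by
          have hpow : (0:ℝ) < ε * 4 ^ (M - (n+1)) := by positivity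
          unfold Vf17 at hlt
          rw [hz, hy] at hlt
          exact lt_of_mul_lt_mul_left hlt hpow.le
        have hdzl : z.dropLast.length = n := by simp [List.length_dropLast, hz]
        have hdyl : y.dropLast.length = n := by simp [List.length_dropLast, hy]
        have hWp := Wv17_parent_mono z y (n + 1) (by omega) hz hy hpp hWlt
        have hVp : Vf17 M ε y.dropLast < Vf17 M ε z.dropLast := by
          unfold Vf17
          rw [hdzl, hdyl]
          have hpow : (0:ℝ) < ε * 4 ^ (M - n) := by positivity
          exact (mul_lt_mul_iff_right₀ hpow).mpr hWp
        have hIH := ih (by omega) z.dropLast y.dropLast hdzl hdyl hVp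
        have e : h z - h y = lam17 k * (h z.dropLast - h y.dropLast)
            + Pc17 k * (Vf17 M ε z - Vf17 M ε y) := by
          linear_combination hAz - hAy
        have h1 : 0 ≤ h z.dropLast - h y.dropLast :=
          le_trans (mul_nonneg (Pc_pos17 _).le (by linarith)) hIH
        have h2 := mul_nonneg (lam_nonneg17 k) h1
        linarith [e.le, e.ge]
  -- final assembly
  intro n hn1 hnM z y hz hy hne
  have hWgap := Wv17_gap z y (by rw [hz, hy]) hne
  have hgap : ε * 4 ^ (M - n) ≤ |Vf17 M ε z - Vf17 M ε y| := by
    have hfac : Vf17 M ε z - Vf17 M ε y = (ε * 4 ^ (M - n)) * (Wv17 z - Wv17 y) := by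
      unfold Vf17
      rw [hz, hy]
      ring
    rw [hfac, abs_mul, abs_of_pos (by positivity : (0:ℝ) < ε * 4 ^ (M - n))]
    exact le_mul_of_one_le_right (by positivity) hWgap
  rcases lt_trichotomy (Vf17 M ε y) (Vf17 M ε z) with hlt | heq | hgt
  · have hc := claim n hn1 hnM z y hz hy hlt
    have habs : ε * 4 ^ (M - n) ≤ Vf17 M ε z - Vf17 M ε y := by
      rwa [abs_of_pos (by linarith)] at hgap
    have h3 : Pc17 (M - n) * (ε * 4 ^ (M - n)) ≤ Pc17 (M - n) * (Vf17 M ε z - Vf17 M ε y) :=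
      mul_le_mul_of_nonneg_left habs (Pc_pos17 _).le
    have h4 : ε * 1 ≤ ε * (Pc17 (M - n) * 4 ^ (M - n)) :=
      mul_le_mul_of_nonneg_left (Pc_mul_pow17 _) hε.le
    have hfin : ε ≤ h z - h y := by nlinarith [h3, h4, hc]
    exact le_trans hfin (le_abs_self _)
  · exfalso
    rw [sub_eq_zero_of_eq heq.symm, abs_zero] at hgap
    nlinarith [pow_pos (by norm_num : (0:ℝ) < 4) (M - n)]
  · have hc := claim n hn1 hnM y z hy hz hgt
    have habs : ε * 4 ^ (M - n) ≤ Vf17 M ε y - Vf17 M ε z := by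
      rw [abs_sub_comm] at hgap
      rwa [abs_of_pos (by linarith)] at hgap
    have h3 : Pc17 (M - n) * (ε * 4 ^ (M - n)) ≤ Pc17 (M - n) * (Vf17 M ε y - Vf17 M ε z) :=
      mul_le_mul_of_nonneg_left habs (Pc_pos17 _).le
    have h4 : ε * 1 ≤ ε * (Pc17 (M - n) * 4 ^ (M - n)) :=
      mul_le_mul_of_nonneg_left (Pc_mul_pow17 _) hε.le
    have hfin : ε ≤ h y - h z := by nlinarith [h3, h4, hc]
    rw [abs_sub_comm]
    exact le_trans hfin (le_abs_self _)
end

section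
/- Let $S_1, S_2 \in \mathbb{R}$ and suppose real numbers $(a(x))_{x}$ indexed by vertices of the binary tree of depth $M$ satisfy $a(z) = a(z0)+a(z1)$ at every vertex of depth $< M$ (with $a(\emptyset) = 0$), and the leaf sums over the two subtrees rooted at $0$ and $1$ equal $S_1$ and $S_2$ respectively. Then $\sum_{n=1}^M \sum_{x \in \{0,1\}^n} \frac{1}{2} a(x)^2 \ge \frac{S_1^2 + S_2^2}{2(2^M - 1)^2}$. -/
theorem stmt_19 (M : ℕ) (hM : 1 ≤ M) (a : List Bool → ℝ) (ha0 : a [] = 0)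
    (hcompat : ∀ z : List Bool, z.length < M → a z = a (z ++ [false]) + a (z ++ [true]))
    (S1 S2 : ℝ)
    (hS1 : S1 = ∑ y : Fin (M - 1) → Bool,
        ∑ j ∈ Finset.Icc 1 M, a ((false :: List.ofFn y).take j))
    (hS2 : S2 = ∑ y : Fin (M - 1) → Bool,
        ∑ j ∈ Finset.Icc 1 M, a ((true :: List.ofFn y).take j)) :
    (S1 ^ 2 + S2 ^ 2) / (2 * ((2:ℝ) ^ M - 1) ^ 2)
      ≤ ∑ n ∈ Finset.Icc 1 M, ∑ x : Fin n → Bool, (1 / 2) * (a (List.ofFn x)) ^ 2 := by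
  have key : ∀ m : ℕ, ∀ z : List Bool, z.length + m ≤ M →
      ∑ y : Fin m → Bool, ∑ j ∈ Finset.range (m+1), a (z ++ (List.ofFn y).take j)
        = ((2:ℝ)^(m+1) - 1) * a z := by
    intro m
    induction m with
    | zero =>
      intro z hz
      simp
      norm_num
    | succ m ih =>
      intro z hz
      have hrw : ∀ y : Fin (m+1) → Bool,
          ∑ j ∈ Finset.range (m+1+1), a (z ++ (List.ofFn y).take j)
          = a z + ∑ j ∈ Finset.range (m+1),
              a ((z ++ [y 0]) ++ (List.ofFn (Fin.tail y)).take j) := by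
        intro y
        rw [Finset.sum_range_succ']
        simp only [List.ofFn_succ, List.take_succ_cons, List.take_zero, List.append_nil]
        rw [add_comm]
        exact congrArg₂ _ rfl (Finset.sum_congr rfl fun i _ => by rw [List.append_cons]; rfl)
      rw [Finset.sum_congr rfl (fun y _ => hrw y)]
      rw [Finset.sum_add_distrib, Finset.sum_const]
      have hcard : (Finset.univ : Finset (Fin (m+1) → Bool)).card = 2^(m+1) := by
        simp [Fintype.card_fun]
      rw [hcard]
      have hsplit : ∑ y : Fin (m+1) → Bool,
          ∑ j ∈ Finset.range (m+1),
            a ((z ++ [y 0]) ++ (List.ofFn (Fin.tail y)).take j)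
          = ∑ p : Bool × (Fin m → Bool),
              ∑ j ∈ Finset.range (m+1),
                a ((z ++ [p.1]) ++ (List.ofFn p.2).take j) := by
        apply Fintype.sum_equiv (Fin.consEquiv (fun _ : Fin (m+1) => Bool)).symm
        intro y
        simp [Fin.consEquiv, Fin.tail]
      rw [hsplit, Fintype.sum_prod_type, Fintype.sum_bool]
      have hlen : ∀ b : Bool, (z ++ [b]).length + m ≤ M := by
        intro b; simp only [List.length_append, List.length_singleton]; omega
      rw [ih (z ++ [true]) (hlen true), ih (z ++ [false]) (hlen false)]
      have hz' : z.length < M := by omega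
      have := hcompat z hz'
      rw [nsmul_eq_mul, this]
      push_cast
      ring
  obtain ⟨m, rfl⟩ : ∃ m, M = m + 1 := ⟨M - 1, (Nat.succ_pred_eq_of_pos hM).symm⟩
  have hred : ∀ b : Bool, (∑ y : Fin (m + 1 - 1) → Bool,
      ∑ j ∈ Finset.Icc 1 (m+1), a ((b :: List.ofFn y).take j))
      = ((2:ℝ)^(m+1) - 1) * a [b] := by
    intro b
    show (∑ y : Fin m → Bool,
        ∑ j ∈ Finset.Icc 1 (m+1), a ((b :: List.ofFn y).take j))
        = ((2:ℝ)^(m+1) - 1) * a [b]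
    have h1 : ∀ y : Fin m → Bool,
        ∑ j ∈ Finset.Icc 1 (m+1), a ((b :: List.ofFn y).take j)
        = ∑ j ∈ Finset.range (m+1), a ([b] ++ (List.ofFn y).take j) := by
      intro y
      rw [← Finset.Ico_add_one_right_eq_Icc, Finset.sum_Ico_eq_sum_range]
      simp [show ∀ x, 1 + x = x + 1 from fun x => Nat.add_comm 1 x, List.take_succ_cons]
    rw [Finset.sum_congr rfl (fun y _ => h1 y)]
    exact key m [b] (by simp; omega)
  have h1 : S1 = ((2:ℝ)^(m+1) - 1) * a [false] := by rw [hS1]; exact hred false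
  have h2 : S2 = ((2:ℝ)^(m+1) - 1) * a [true] := by rw [hS2]; exact hred true
  have hterm : ∀ n ∈ Finset.Icc 1 (m+1),
      0 ≤ ∑ x : Fin n → Bool, (1 / 2) * (a (List.ofFn x)) ^ 2 := by
    intro n _
    positivity
  have h3 : (∑ x : Fin 1 → Bool, (1 / 2) * (a (List.ofFn x)) ^ 2)
      ≤ ∑ n ∈ Finset.Icc 1 (m+1), ∑ x : Fin n → Bool, (1 / 2) * (a (List.ofFn x)) ^ 2 :=
    Finset.single_le_sum hterm (by simp)
  have h4 : (∑ x : Fin 1 → Bool, (1 / 2) * (a (List.ofFn x)) ^ 2)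
      = (1/2) * a [false] ^ 2 + (1/2) * a [true] ^ 2 := by
    rw [show (∑ x : Fin 1 → Bool, (1 / 2) * (a (List.ofFn x)) ^ 2)
        = ∑ b : Bool, (1/2) * (a [b]) ^ 2 from
      Fintype.sum_equiv (Equiv.funUnique (Fin 1) Bool) _ _
        (fun x => by simp [Equiv.funUnique, List.ofFn_succ]), Fintype.sum_bool]
    ring
  have hpos : (0:ℝ) < (2:ℝ)^(m+1) - 1 := by
    have : (1:ℝ) < 2^(m+1) := by
      apply one_lt_pow₀ (by norm_num) (by omega)
    linarith
  rw [h1, h2]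
  refine le_trans (le_of_eq ?_) (h4 ▸ h3)
  field_simp
end
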